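/- Let 1 ≤ T < t_0 ≤ ∞, let I = [T, t_0), and for t ∈ I let J = [t, ∞) ∩ I. Let h ∈ C([1,∞), ℝ^+) be such that for some λ > 0 the function t^λ h(t) is nonincreasing and tends to zero at infinity. Let 1 ≤ q, q_k ≤ ∞ (1 ≤ k ≤ n) be such that μ := 1/q − Σ_k 1/q_k ≥ 0. Let f_k ∈ L^{q_k}(I) satisfy ‖f_k; L^{q_k}(J)‖ ≤ N_k h(t) for 1 ≤ k ≤ n, for some constants N_k and all t ∈ I. Let ρ ≥ 0 be such that nλ + ρ > μ. Then for all t ∈ I, ‖(Π_k f_k) t^{-ρ}; L^q(J)‖ ≤ C (Π_k N_k) h(t)^n t^{μ−ρ}, where C = (1 − 2^{−q(nλ+ρ−μ)})^{−1/q}. -/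

import Mathlib

open MeasureTheory Filter FourierTransform Real Set
open scoped ENNReal

noncomputable section

abbrev Rn (n : ℕ) : Type := EuclideanSpace ℝ (Fin n)

namespace Zakharov

variable {n : ℕ}

/-- Complexification of a real-valued function. -/
def cplx (f : Rn n → ℝ) : Rn n → ℂ := fun x => (f x : ℂ)

/-- Fourier multiplier operator. -/
def fmul (m : Rn n → ℂ) (f : Rn n → ℂ) : Rn n → ℂ :=
  𝓕⁻ fun ξ => m ξ * 𝓕 f ξ

/-- Fractional power `ω^s` of `ω = (-Δ)^{1/2}`. -/
def omegaPow (s : ℝ) (f : Rn n → ℂ) : Rn n → ℂ :=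
  fmul (fun ξ => (((2 * π * ‖ξ‖) ^ s : ℝ) : ℂ)) f

/-- Inverse Laplacian `Δ⁻¹ = -ω⁻²`. -/
def invLap (f : Rn n → ℂ) : Rn n → ℂ :=
  fmul (fun ξ => ((-(((2 * π * ‖ξ‖) ^ (2 : ℕ))⁻¹) : ℝ) : ℂ)) f

/-- Free Schrödinger group `U(t) = exp(i(t/2)Δ)`. -/
def schrod (t : ℝ) (f : Rn n → ℂ) : Rn n → ℂ :=
  fmul (fun ξ => Complex.exp (-(Complex.I * (t : ℂ) * (((2 * π * ‖ξ‖) ^ (2 : ℕ) : ℝ) : ℂ)) / 2)) f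

/-- Solution `A₀(t) = cos(ωt)A₊ + ω⁻¹ sin(ωt) Ȧ₊` of the free wave equation. -/
def waveSol (Ap Adot : Rn n → ℝ) (t : ℝ) : Rn n → ℝ := fun x =>
  (fmul (fun ξ => ((Real.cos (2 * π * ‖ξ‖ * t) : ℝ) : ℂ)) (cplx Ap) x
    + fmul (fun ξ => ((Real.sin (2 * π * ‖ξ‖ * t) / (2 * π * ‖ξ‖) : ℝ) : ℂ)) (cplx Adot) x).re

/-- Pointwise time derivative `∂ₜ`. -/
def dt {α : Type*} {E : Type*} [NormedAddCommGroup E] [NormedSpace ℝ E]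
    (u : ℝ → α → E) (t : ℝ) (x : α) : E :=
  deriv (fun s => u s x) t

/-- Spatial partial derivative in direction `i`. -/
def pd {E : Type*} [NormedAddCommGroup E] [NormedSpace ℝ E]
    (i : Fin n) (g : Rn n → E) (x : Rn n) : E :=
  fderiv ℝ g x (EuclideanSpace.single i 1)

/-- Laplacian. -/
def lap {E : Type*} [NormedAddCommGroup E] [NormedSpace ℝ E]
    (g : Rn n → E) (x : Rn n) : E :=
  ∑ i, pd i (fun y => pd i g y) x

/-- Sobolev norm `‖f; W_r^k‖` (with values in `ℝ≥0∞`). -/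
def sobN {E : Type*} [NormedAddCommGroup E] [NormedSpace ℝ E]
    (k : ℕ) (r : ℝ≥0∞) (f : Rn n → E) : ℝ≥0∞ :=
  ∑ i ∈ Finset.range (k + 1), eLpNorm (iteratedFDeriv ℝ i f) r volume

/-- Membership in the Sobolev space `W_r^k`. -/
def MemW {E : Type*} [NormedAddCommGroup E] [NormedSpace ℝ E]
    (k : ℕ) (r : ℝ≥0∞) (f : Rn n → E) : Prop :=
  ∀ i ≤ k, MemLp (iteratedFDeriv ℝ i f) r volume

/-- `L^q` norm in time on the set `J`. -/
def tLp (q : ℝ≥0∞) (J : Set ℝ) (g : ℝ → ℝ≥0∞) : ℝ≥0∞ :=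
  if q = ∞ then essSup g (volume.restrict J)
  else (∫⁻ s in J, g s ^ q.toReal) ^ (1 / q.toReal)

/-- The quantity whose supremum over `t ∈ I` is the `X(I)` norm. -/
def XNormAt (h : ℝ → ℝ) (I : Set ℝ) (v : ℝ → Rn n → ℂ) (B : ℝ → Rn n → ℝ) (t : ℝ) : ℝ≥0∞ :=
  ENNReal.ofReal (h t)⁻¹ *
    (sobN 2 2 (v t) + eLpNorm (dt v t) 2 volume
      + tLp ((8 : ℝ≥0∞) / (n : ℝ≥0∞)) (Ici t ∩ I) (fun s => sobN 2 4 (v s))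
      + tLp ((8 : ℝ≥0∞) / (n : ℝ≥0∞)) (Ici t ∩ I) (fun s => eLpNorm (dt v s) 4 volume)
      + sobN 1 2 (B t) + eLpNorm (dt B t) 2 volume)

/-- Membership of `(v, B)` in the space `X(I)`:
`(v,B) ∈ C(I, H²⊕H¹) ∩ C¹(I, L²⊕L²)` with finite `X(I)` norm. -/
def MemX (h : ℝ → ℝ) (I : Set ℝ) (v : ℝ → Rn n → ℂ) (B : ℝ → Rn n → ℝ) : Prop :=
  (∀ t ∈ I, Tendsto (fun s => sobN 2 2 (fun x => v s x - v t x)) (nhdsWithin t I) (nhds 0)) ∧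
  (∀ t ∈ I, Tendsto (fun s => sobN 1 2 (fun x => B s x - B t x)) (nhdsWithin t I) (nhds 0)) ∧
  (∀ t ∈ I, Tendsto (fun s => eLpNorm (fun x => dt v s x - dt v t x) 2 volume)
      (nhdsWithin t I) (nhds 0)) ∧
  (∀ t ∈ I, Tendsto (fun s => eLpNorm (fun x => dt B s x - dt B t x) 2 volume)
      (nhdsWithin t I) (nhds 0)) ∧
  (∀ t ∈ I, Tendsto (fun s => ENNReal.ofReal |s - t|⁻¹ *
      eLpNorm (fun x => v s x - v t x - (s - t) • dt v t x) 2 volume)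
      (nhdsWithin t (I \ {t})) (nhds 0)) ∧
  (∀ t ∈ I, Tendsto (fun s => ENNReal.ofReal |s - t|⁻¹ *
      eLpNorm (fun x => B s x - B t x - (s - t) • dt B t x) 2 volume)
      (nhdsWithin t (I \ {t})) (nhds 0)) ∧
  (⨆ t ∈ I, XNormAt h I v B t) < ∞

/-- `(u, A)` solves the Zakharov system on `I`. -/
def IsZakharov (I : Set ℝ) (u : ℝ → Rn n → ℂ) (A : ℝ → Rn n → ℝ) : Prop :=
  ∀ t ∈ I, ∀ x,
    Complex.I * dt u t x = -(1 / 2 : ℂ) * lap (u t) x + (A t x : ℂ) * u t x ∧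
    dt (dt A) t x - lap (A t) x = lap (fun y => Complex.normSq (u t y)) x

/-- The Schrödinger remainder `R₁ = i∂ₜu_a + (1/2)Δu_a − A_a u_a`. -/
def R1 (ua : ℝ → Rn n → ℂ) (Aa : ℝ → Rn n → ℝ) (t : ℝ) (x : Rn n) : ℂ :=
  Complex.I * dt ua t x + (1 / 2 : ℂ) * lap (ua t) x - (Aa t x : ℂ) * ua t x

/-- The wave remainder `R₂ = □A_a − Δ|u_a|²`. -/
def R2 (ua : ℝ → Rn n → ℂ) (Aa : ℝ → Rn n → ℝ) (t : ℝ) (x : Rn n) : ℝ :=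
  dt (dt Aa) t x - lap (Aa t) x - lap (fun y => Complex.normSq (ua t y)) x

/-- `(v, B)` solves the difference system (1.3) on `I`. -/
def IsPerturbedSol (I : Set ℝ) (ua : ℝ → Rn n → ℂ) (Aa : ℝ → Rn n → ℝ)
    (v : ℝ → Rn n → ℂ) (B : ℝ → Rn n → ℝ) : Prop :=
  ∀ t ∈ I, ∀ x,
    Complex.I * dt v t x = -(1 / 2 : ℂ) * lap (v t) x
        + ((Aa t x + B t x : ℝ) : ℂ) * v t x + ((B t x : ℝ) : ℂ) * ua t x - R1 ua Aa t x ∧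
    dt (dt B) t x - lap (B t) x
      = lap (fun y => Complex.normSq (v t y) + 2 * ((starRingEnd ℂ) (ua t y) * v t y).re) x
        - R2 ua Aa t x

/-- `h ∈ C([1,∞), ℝ⁺)` and `t^λ h(t)` is nonincreasing and tends to zero at infinity. -/
def HAdm (lam : ℝ) (h : ℝ → ℝ) : Prop :=
  ContinuousOn h (Ici 1) ∧ (∀ t, (1 : ℝ) ≤ t → 0 < h t) ∧
  AntitoneOn (fun t => t ^ lam * h t) (Ici 1) ∧
  Tendsto (fun t => t ^ lam * h t) atTop (nhds 0)

/-- `i`-th component of the Galilei operator `J = x + it∇` applied to `g`. -/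
def Jop (t : ℝ) (g : Rn n → ℂ) (i : Fin n) (x : Rn n) : ℂ :=
  ((x i : ℝ) : ℂ) * g x + Complex.I * (t : ℂ) * pd i g x

/-- Scaling operator `P = t∂ₜ + x·∇`. -/
def Pop (g : ℝ → Rn n → ℂ) (t : ℝ) (x : Rn n) : ℂ :=
  (t : ℂ) * dt g t x + ∑ i, ((x i : ℝ) : ℂ) * pd i (g t) x

/-- Admissible pair for the Strichartz inequality. -/
def Admissible (n : ℕ) (q r : ℝ≥0∞) : Prop :=
  2 ≤ q ∧ 2 ≤ r ∧ 2 / q = (n : ℝ≥0∞) / 2 - (n : ℝ≥0∞) / r ∧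
    (if n = 2 then 2 / q < 1 else 2 / q ≤ 1)

/-- Hölder conjugate exponent in `ℝ≥0∞`. -/
def conjE (p : ℝ≥0∞) : ℝ≥0∞ :=
  if p = 1 then ∞ else if p = ∞ then 1 else ENNReal.ofReal (p.toReal / (p.toReal - 1))

end Zakharov

open Zakharov


section AuxHolder

variable {α : Type*} {m : MeasurableSpace α} {μ : MeasureTheory.Measure α}

lemma eLpNorm_finset_prod_le {ι : Type*} (s : Finset ι)
    (p : ι → ℝ≥0∞) (F : ι → α → ℝ) (hm : ∀ i ∈ s, AEStronglyMeasurable (F i) μ) :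
    eLpNorm (fun x => ∏ i ∈ s, F i x) (∑ i ∈ s, (p i)⁻¹)⁻¹ μ
      ≤ ∏ i ∈ s, eLpNorm (F i) (p i) μ := by
  classical
  induction s using Finset.induction with
  | empty =>
      simp only [Finset.prod_empty, Finset.sum_empty, ENNReal.inv_zero]
      calc eLpNorm (fun _ : α => (1 : ℝ)) ∞ μ
          ≤ μ Set.univ ^ (∞ : ℝ≥0∞).toReal⁻¹ * ENNReal.ofReal 1 :=
            eLpNorm_le_of_ae_bound (Filter.Eventually.of_forall fun x => by simp)
        _ = 1 := by simp
  | @insert a s' ha IH =>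
      have hmem : ∀ i ∈ s', AEStronglyMeasurable (F i) μ := fun i hi =>
        hm i (Finset.mem_insert_of_mem hi)
      have hprod : AEStronglyMeasurable (fun x => ∏ i ∈ s', F i x) μ :=
        Finset.aestronglyMeasurable_fun_prod _ hmem
      have hpqr : 1 / (∑ i ∈ insert a s', (p i)⁻¹)⁻¹
          = 1 / p a + 1 / (∑ i ∈ s', (p i)⁻¹)⁻¹ := by
        simp [one_div, inv_inv, Finset.sum_insert ha]
      calc eLpNorm (fun x => ∏ i ∈ insert a s', F i x)
            (∑ i ∈ insert a s', (p i)⁻¹)⁻¹ μ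
          = eLpNorm ((F a) • fun x => ∏ i ∈ s', F i x)
            (∑ i ∈ insert a s', (p i)⁻¹)⁻¹ μ := by
            apply eLpNorm_congr_ae
            filter_upwards with x
            simp [Finset.prod_insert ha]
        _ ≤ eLpNorm (F a) (p a) μ * eLpNorm (fun x => ∏ i ∈ s', F i x)
              (∑ i ∈ s', (p i)⁻¹)⁻¹ μ :=
            eLpNorm_smul_le_mul_eLpNorm hprod (hm a (Finset.mem_insert_self a s'))
              (hpqr := ⟨by simpa only [one_div] using hpqr.symm⟩)
        _ ≤ _ := by
            rw [Finset.prod_insert ha]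
            exact mul_le_mul_right (IH hmem) _

end AuxHolder

/-- Lemma 2.2: weighted product estimate in time on `I = [T, t₀)`. -/
theorem product_time_estimate
    (n : ℕ) (T : ℝ) (t0 : ℝ≥0∞) (hT : 1 ≤ T) (hTt0 : ENNReal.ofReal T < t0)
    (lam : ℝ) (hlam : 0 < lam) (h : ℝ → ℝ) (hadm : HAdm lam h)
    (q : ℝ≥0∞) (qk : Fin n → ℝ≥0∞) (hq : 1 ≤ q) (hqk : ∀ k, 1 ≤ qk k)
    (f : Fin n → ℝ → ℝ) (N : Fin n → ℝ) (ρ : ℝ) (hρ : 0 ≤ ρ)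
    (hμ : (0 : ℝ) ≤ (1 / q).toReal - ∑ k, (1 / qk k).toReal)
    (hbig : (1 / q).toReal - ∑ k, (1 / qk k).toReal < (n : ℝ) * lam + ρ)
    (hfk : ∀ k, MemLp (f k) (qk k)
      (volume.restrict {s : ℝ | T ≤ s ∧ ENNReal.ofReal s < t0}))
    (hbd : ∀ k, ∀ t ∈ {s : ℝ | T ≤ s ∧ ENNReal.ofReal s < t0},
      eLpNorm (f k) (qk k)
          (volume.restrict (Ici t ∩ {s : ℝ | T ≤ s ∧ ENNReal.ofReal s < t0}))
        ≤ ENNReal.ofReal (N k * h t)) :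
    ∀ t ∈ {s : ℝ | T ≤ s ∧ ENNReal.ofReal s < t0},
      eLpNorm (fun s : ℝ => s ^ (-ρ) * ∏ k, f k s) q
          (volume.restrict (Ici t ∩ {s : ℝ | T ≤ s ∧ ENNReal.ofReal s < t0}))
        ≤ ENNReal.ofReal
            ((1 - 2 ^ (-(q.toReal *
                ((n : ℝ) * lam + ρ - ((1 / q).toReal - ∑ k, (1 / qk k).toReal))))) ^
                (-(1 / q.toReal)) *
              (∏ k, N k) * h t ^ (n : ℕ) *
              t ^ (((1 / q).toReal - ∑ k, (1 / qk k).toReal) - ρ)) := by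
  classical
  intro t ht
  set I : Set ℝ := {s : ℝ | T ≤ s ∧ ENNReal.ofReal s < t0} with hIdef
  obtain ⟨hcont, hpos, hanti, hlim⟩ := hadm
  obtain ⟨hTt, htt0⟩ := ht
  have ht1 : (1 : ℝ) ≤ t := hT.trans hTt
  have ht0' : (0 : ℝ) < t := lt_of_lt_of_le one_pos ht1
  set μr : ℝ := (1 / q).toReal - ∑ k, (1 / qk k).toReal with hμrdef
  set σ : ℝ := (n : ℝ) * lam + ρ - μr with hσdef
  have hσpos : 0 < σ := by rw [hσdef]; linarith
  have hq0 : q ≠ 0 := (zero_lt_one.trans_le hq).ne'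
  have hqk0 : ∀ k, qk k ≠ 0 := fun k => (zero_lt_one.trans_le (hqk k)).ne'
  have hImeas : MeasurableSet I := by
    have hIeq : I = Ici T ∩ ENNReal.ofReal ⁻¹' (Iio t0) := rfl
    rw [hIeq]
    exact measurableSet_Ici.inter (ENNReal.measurable_ofReal measurableSet_Iio)
  have hfm : ∀ (k : Fin n) (A : Set ℝ), A ⊆ I → AEStronglyMeasurable (f k) (volume.restrict A) :=
    fun k A hA => ((hfk k).1).mono_measure (Measure.restrict_mono hA le_rfl)
  have hwm : ∀ A : Set ℝ, AEStronglyMeasurable (fun s : ℝ => s ^ (-ρ))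
      (volume.restrict A) := fun A =>
    Measurable.aestronglyMeasurable (by fun_prop)
  -- degenerate case: some N k nonpositive
  by_cases hN : ∀ k, 0 < N k
  swap
  · push_neg at hN
    obtain ⟨k0, hk0⟩ := hN
    have hb := hbd k0 t ⟨hTt, htt0⟩
    have hz : ENNReal.ofReal (N k0 * h t) = 0 := by
      rw [ENNReal.ofReal_eq_zero]
      have := hpos t ht1
      nlinarith
    have hzero : eLpNorm (f k0) (qk k0) (volume.restrict (Ici t ∩ I)) = 0 :=
      le_antisymm (hz ▸ hb) zero_le
    have hae : f k0 =ᵐ[volume.restrict (Ici t ∩ I)] 0 :=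
      (eLpNorm_eq_zero_iff (hfm k0 _ inter_subset_right) (hqk0 k0)).mp hzero
    have hG0 : (fun s : ℝ => s ^ (-ρ) * ∏ k, f k s) =ᵐ[volume.restrict (Ici t ∩ I)] 0 := by
      filter_upwards [hae] with s hs
      simp only [Pi.zero_apply] at hs ⊢
      have hz' : ∏ k, f k s = 0 :=
        Finset.prod_eq_zero (f := fun k => f k s) (Finset.mem_univ k0) hs
      rw [hz', mul_zero]
    rw [eLpNorm_congr_ae hG0, eLpNorm_zero]
    exact zero_le
  -- main case
  set p0 : ℝ≥0∞ := (ENNReal.ofReal μr)⁻¹ with hp0def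
  set r' : ℝ≥0∞ := (∑ k, (qk k)⁻¹)⁻¹ with hr'def
  have hμ' : (0 : ℝ) ≤ μr := hμ
  have hinv_k : ∀ k, (qk k)⁻¹ = ENNReal.ofReal ((1 / qk k)).toReal := fun k => by
    rw [one_div, ENNReal.ofReal_toReal (ENNReal.inv_ne_top.2 (hqk0 k))]
  have hinvq : 1 / q = ENNReal.ofReal μr + ∑ k, (qk k)⁻¹ := by
    have hs : ∑ k, (qk k)⁻¹ = ENNReal.ofReal (∑ k, (1 / qk k).toReal) := by
      rw [ENNReal.ofReal_sum_of_nonneg fun k _ => ENNReal.toReal_nonneg]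
      exact Finset.sum_congr rfl fun k _ => hinv_k k
    rw [hs, ← ENNReal.ofReal_add hμ' (Finset.sum_nonneg fun k _ => ENNReal.toReal_nonneg),
      hμrdef, sub_add_cancel]
    exact (ENNReal.ofReal_toReal (by simp [one_div, ENNReal.inv_ne_top, hq0])).symm
  have hHolder : ∀ A : Set ℝ, A ⊆ I →
      eLpNorm (fun s : ℝ => s ^ (-ρ) * ∏ k, f k s) q (volume.restrict A)
        ≤ eLpNorm (fun s : ℝ => s ^ (-ρ)) p0 (volume.restrict A)
          * ∏ k, eLpNorm (f k) (qk k) (volume.restrict A) := by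
    intro A hA
    have h1 := eLpNorm_smul_le_mul_eLpNorm (μ := volume.restrict A)
      (p := p0) (q := r') (r := q)
      (f := fun s : ℝ => ∏ k, f k s) (φ := fun s : ℝ => s ^ (-ρ))
      (Finset.aestronglyMeasurable_fun_prod _ fun k _ => hfm k A hA) (hwm A)
      (hpqr := ⟨by
        have := hinvq
        simp only [hp0def, hr'def, one_div, inv_inv] at this ⊢
        rw [this]⟩)
    have h2 : eLpNorm (fun s : ℝ => ∏ k, f k s) r' (volume.restrict A)
        ≤ ∏ k, eLpNorm (f k) (qk k) (volume.restrict A) := by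
      rw [hr'def]
      exact eLpNorm_finset_prod_le Finset.univ qk f (fun k _ => hfm k A hA)
    exact le_trans h1 (mul_le_mul_right h2 _)
  have hwbound : ∀ (A : Set ℝ) (b : ℝ), MeasurableSet A → A ⊆ Ici b → 0 < b →
      volume A ≤ ENNReal.ofReal b →
      eLpNorm (fun s : ℝ => s ^ (-ρ)) p0 (volume.restrict A)
        ≤ ENNReal.ofReal (b ^ μr * b ^ (-ρ)) := by
    intro A b hAm hAb hb hvol
    have hae : ∀ᵐ s ∂(volume.restrict A), ‖s ^ (-ρ)‖ ≤ b ^ (-ρ) := by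
      filter_upwards [ae_restrict_mem hAm] with s hs
      rw [Real.norm_eq_abs, abs_of_nonneg (Real.rpow_nonneg (hb.trans_le (hAb hs)).le _)]
      exact Real.rpow_le_rpow_of_nonpos hb (hAb hs) (neg_nonpos.2 hρ)
    have h2 := eLpNorm_le_of_ae_bound (p := p0) hae
    have hp0t : p0.toReal⁻¹ = μr := by
      rw [hp0def, ENNReal.toReal_inv, inv_inv, ENNReal.toReal_ofReal hμ']
    calc eLpNorm (fun s : ℝ => s ^ (-ρ)) p0 (volume.restrict A)
        ≤ (volume.restrict A) Set.univ ^ p0.toReal⁻¹ * ENNReal.ofReal (b ^ (-ρ)) := h2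
      _ ≤ ENNReal.ofReal (b ^ μr) * ENNReal.ofReal (b ^ (-ρ)) := by
          apply mul_le_mul_left
          rw [hp0t, ← ENNReal.ofReal_rpow_of_pos hb]
          apply ENNReal.rpow_le_rpow _ hμ'
          simpa [Measure.restrict_apply_univ] using hvol
      _ = ENNReal.ofReal (b ^ μr * b ^ (-ρ)) :=
          (ENNReal.ofReal_mul (Real.rpow_nonneg hb.le _)).symm
  set M : ℝ := (∏ k, N k) * h t ^ n * t ^ (μr - ρ) with hMdef
  have hprodN : (0 : ℝ) < ∏ k, N k := Finset.prod_pos fun k _ => hN k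
  have hht : (0 : ℝ) < h t := hpos t ht1
  have hM0 : (0 : ℝ) < M := by
    rw [hMdef]
    exact mul_pos (mul_pos hprodN (pow_pos hht n)) (Real.rpow_pos_of_pos ht0' _)
  by_cases hqtop : q = ∞
  · -- case q = ∞
    have hμ0 : μr = 0 := by
      have h1 : (1 / q).toReal = 0 := by rw [hqtop]; simp
      have h2 : (0 : ℝ) ≤ ∑ k, (1 / qk k).toReal :=
        Finset.sum_nonneg fun k _ => ENNReal.toReal_nonneg
      have h3 : μr ≤ 0 := by rw [hμrdef, h1]; linarith
      linarith [hμ']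
    have hJm : MeasurableSet (Ici t ∩ I) := measurableSet_Ici.inter hImeas
    have hwb : eLpNorm (fun s : ℝ => s ^ (-ρ)) p0 (volume.restrict (Ici t ∩ I))
        ≤ ENNReal.ofReal (t ^ (-ρ)) := by
      have hae : ∀ᵐ s ∂(volume.restrict (Ici t ∩ I)), ‖s ^ (-ρ)‖ ≤ t ^ (-ρ) := by
        filter_upwards [ae_restrict_mem hJm] with s hs
        have hts : t ≤ s := hs.1
        rw [Real.norm_eq_abs, abs_of_nonneg (Real.rpow_nonneg (ht0'.trans_le hts).le _)]
        exact Real.rpow_le_rpow_of_nonpos ht0' hts (neg_nonpos.2 hρ)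
      have h2 := eLpNorm_le_of_ae_bound (p := p0) hae
      have hp0 : p0 = ∞ := by rw [hp0def, hμ0]; simp
      rw [hp0] at h2 ⊢
      simpa using h2
    have hfb' : ∏ k, eLpNorm (f k) (qk k) (volume.restrict (Ici t ∩ I))
        ≤ ENNReal.ofReal ((∏ k, N k) * h t ^ n) := by
      calc ∏ k, eLpNorm (f k) (qk k) (volume.restrict (Ici t ∩ I))
          ≤ ∏ k, ENNReal.ofReal (N k * h t) :=
            Finset.prod_le_prod' fun k _ => hbd k t ⟨hTt, htt0⟩
        _ = ENNReal.ofReal (∏ k, (N k * h t)) :=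
            (ENNReal.ofReal_prod_of_nonneg fun k _ =>
              mul_nonneg (hN k).le hht.le).symm
        _ = _ := by
            rw [Finset.prod_mul_distrib, Finset.prod_const, Finset.card_univ,
              Fintype.card_fin]
    calc eLpNorm (fun s : ℝ => s ^ (-ρ) * ∏ k, f k s) q (volume.restrict (Ici t ∩ I))
        ≤ eLpNorm (fun s : ℝ => s ^ (-ρ)) p0 (volume.restrict (Ici t ∩ I))
          * ∏ k, eLpNorm (f k) (qk k) (volume.restrict (Ici t ∩ I)) :=
          hHolder _ inter_subset_right
      _ ≤ ENNReal.ofReal (t ^ (-ρ)) * ENNReal.ofReal ((∏ k, N k) * h t ^ n) :=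
          mul_le_mul' hwb hfb'
      _ = ENNReal.ofReal (t ^ (-ρ) * ((∏ k, N k) * h t ^ n)) :=
          (ENNReal.ofReal_mul (Real.rpow_nonneg ht0'.le _)).symm
      _ = _ := by
          rw [hqtop, hμ0]
          norm_num [Real.rpow_zero, zero_sub]
          ring_nf
  · -- case q finite
    have hqt : 0 < q.toReal := ENNReal.toReal_pos hq0 hqtop
    set A : ℕ → Set ℝ := fun j => Ico ((2:ℝ) ^ j * t) (2 * ((2:ℝ) ^ j * t)) ∩ I with hAdef
    have hD1 : ∀ j : ℕ, (1 : ℝ) ≤ (2:ℝ) ^ j := fun j => one_le_pow₀ one_le_two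
    have hDpos : ∀ j : ℕ, (0 : ℝ) < (2:ℝ) ^ j := fun j => lt_of_lt_of_le one_pos (hD1 j)
    have hbt : ∀ j : ℕ, t ≤ (2:ℝ) ^ j * t := fun j => le_mul_of_one_le_left ht0'.le (hD1 j)
    have hAm : ∀ j, MeasurableSet (A j) := fun j => measurableSet_Ico.inter hImeas
    have hAsubI : ∀ j, A j ⊆ I := fun j => inter_subset_right
    have hAsub : ∀ j, A j ⊆ Ici ((2:ℝ) ^ j * t) := fun j =>
      inter_subset_left.trans Ico_subset_Ici_self
    have hvolA : ∀ j, volume (A j) ≤ ENNReal.ofReal ((2:ℝ) ^ j * t) := by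
      intro j
      calc volume (A j) ≤ volume (Ico ((2:ℝ) ^ j * t) (2 * ((2:ℝ) ^ j * t))) :=
            measure_mono inter_subset_left
        _ = ENNReal.ofReal (2 * ((2:ℝ) ^ j * t) - (2:ℝ) ^ j * t) := Real.volume_Ico
        _ = ENNReal.ofReal ((2:ℝ) ^ j * t) := by congr 1; ring
    have hhD : ∀ j : ℕ, h ((2:ℝ) ^ j * t) ≤ h t * ((2:ℝ) ^ j) ^ (-lam) := by
      intro j
      have h1b : (1 : ℝ) ≤ (2:ℝ) ^ j * t := ht1.trans (hbt j)
      have ha : ((2:ℝ) ^ j * t) ^ lam * h ((2:ℝ) ^ j * t) ≤ t ^ lam * h t :=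
        hanti (mem_Ici.2 ht1) (mem_Ici.2 h1b) (hbt j)
      rw [Real.mul_rpow (hDpos j).le ht0'.le] at ha
      have hDl : (0 : ℝ) < ((2:ℝ) ^ j) ^ lam := Real.rpow_pos_of_pos (hDpos j) _
      have htl : (0 : ℝ) < t ^ lam := Real.rpow_pos_of_pos ht0' _
      have key : h ((2:ℝ) ^ j * t) * ((2:ℝ) ^ j) ^ lam ≤ h t := by
        have h2 : t ^ lam * (h ((2:ℝ) ^ j * t) * ((2:ℝ) ^ j) ^ lam) ≤ t ^ lam * h t := by
          nlinarith [ha]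
        exact le_of_mul_le_mul_left h2 htl
      rw [Real.rpow_neg (hDpos j).le, ← div_eq_mul_inv, le_div_iff₀ hDl]
      exact key
    have hfb : ∀ (j : ℕ) (k : Fin n), eLpNorm (f k) (qk k) (volume.restrict (A j))
        ≤ ENNReal.ofReal (N k * (h t * ((2:ℝ) ^ j) ^ (-lam))) := by
      intro j k
      by_cases hj : ENNReal.ofReal ((2:ℝ) ^ j * t) < t0
      · have hsub : A j ⊆ Ici ((2:ℝ) ^ j * t) ∩ I :=
          subset_inter (hAsub j) (hAsubI j)
        calc eLpNorm (f k) (qk k) (volume.restrict (A j))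
            ≤ eLpNorm (f k) (qk k) (volume.restrict (Ici ((2:ℝ) ^ j * t) ∩ I)) :=
              eLpNorm_mono_measure _ (Measure.restrict_mono hsub le_rfl)
          _ ≤ ENNReal.ofReal (N k * h ((2:ℝ) ^ j * t)) :=
              hbd k _ ⟨hTt.trans (hbt j), hj⟩
          _ ≤ _ := ENNReal.ofReal_le_ofReal
              (mul_le_mul_of_nonneg_left (hhD j) (hN k).le)
      · push_neg at hj
        have hempty : A j = ∅ := by
          ext s
          simp only [hAdef, mem_inter_iff, mem_Ico, mem_empty_iff_false, iff_false, not_and]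
          rintro ⟨hs1, -⟩ ⟨-, hs3⟩
          exact (hs3.trans_le (hj.trans (ENNReal.ofReal_le_ofReal hs1))).false
        rw [hempty, Measure.restrict_empty, eLpNorm_measure_zero]
        exact zero_le
    have hkey : ∀ j : ℕ,
        (((2:ℝ) ^ j * t) ^ μr * ((2:ℝ) ^ j * t) ^ (-ρ)) *
          ∏ k, (N k * (h t * ((2:ℝ) ^ j) ^ (-lam)))
        = M * ((2:ℝ) ^ (-σ)) ^ j := by
      intro j
      have hDp := hDpos j
      have hbp : (0 : ℝ) < (2:ℝ) ^ j * t := mul_pos hDp ht0'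
      have e1 : ((2:ℝ) ^ j * t) ^ μr * ((2:ℝ) ^ j * t) ^ (-ρ)
          = ((2:ℝ) ^ j) ^ (μr - ρ) * t ^ (μr - ρ) := by
        rw [← Real.rpow_add hbp, ← sub_eq_add_neg, Real.mul_rpow hDp.le ht0'.le]
      have e2 : ∏ k, (N k * (h t * ((2:ℝ) ^ j) ^ (-lam)))
          = (∏ k, N k) * (h t ^ n * ((2:ℝ) ^ j) ^ (-(lam * n))) := by
        rw [Finset.prod_mul_distrib, Finset.prod_const, Finset.card_univ, Fintype.card_fin,
          mul_pow, ← Real.rpow_natCast (((2:ℝ) ^ j) ^ (-lam)) n, ← Real.rpow_mul hDp.le,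
          neg_mul]
      have e3 : ((2:ℝ) ^ j) ^ (μr - ρ) * ((2:ℝ) ^ j) ^ (-(lam * n))
          = ((2:ℝ) ^ (-σ)) ^ j := by
        rw [← Real.rpow_add hDp]
        have he : μr - ρ + -(lam * (n:ℝ)) = -σ := by rw [hσdef]; ring
        rw [he, ← Real.rpow_natCast (2:ℝ) j, ← Real.rpow_mul (by norm_num : (0:ℝ) ≤ 2),
          mul_comm ((j:ℝ)) (-σ), Real.rpow_mul (by norm_num : (0:ℝ) ≤ 2),
          Real.rpow_natCast]
      rw [e1, e2, hMdef]
      linear_combination (t ^ (μr - ρ) * (∏ k, N k) * h t ^ n) * e3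
    have hblock : ∀ j : ℕ,
        eLpNorm (fun s : ℝ => s ^ (-ρ) * ∏ k, f k s) q (volume.restrict (A j))
          ≤ ENNReal.ofReal (M * ((2:ℝ) ^ (-σ)) ^ j) := by
      intro j
      have hb := hwbound (A j) ((2:ℝ) ^ j * t) (hAm j) (hAsub j)
        (mul_pos (hDpos j) ht0') (hvolA j)
      have hf' : ∏ k, eLpNorm (f k) (qk k) (volume.restrict (A j))
          ≤ ENNReal.ofReal (∏ k, (N k * (h t * ((2:ℝ) ^ j) ^ (-lam)))) := by
        rw [ENNReal.ofReal_prod_of_nonneg (fun k _ =>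
          mul_nonneg (hN k).le (mul_nonneg hht.le (Real.rpow_nonneg (hDpos j).le _)))]
        exact Finset.prod_le_prod' fun k _ => hfb j k
      calc eLpNorm (fun s : ℝ => s ^ (-ρ) * ∏ k, f k s) q (volume.restrict (A j))
          ≤ eLpNorm (fun s : ℝ => s ^ (-ρ)) p0 (volume.restrict (A j))
            * ∏ k, eLpNorm (f k) (qk k) (volume.restrict (A j)) :=
            hHolder (A j) (hAsubI j)
        _ ≤ ENNReal.ofReal (((2:ℝ) ^ j * t) ^ μr * ((2:ℝ) ^ j * t) ^ (-ρ)) *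
              ENNReal.ofReal (∏ k, (N k * (h t * ((2:ℝ) ^ j) ^ (-lam)))) :=
            mul_le_mul' hb hf'
        _ = ENNReal.ofReal ((((2:ℝ) ^ j * t) ^ μr * ((2:ℝ) ^ j * t) ^ (-ρ)) *
              ∏ k, (N k * (h t * ((2:ℝ) ^ j) ^ (-lam)))) :=
            (ENNReal.ofReal_mul (mul_nonneg (Real.rpow_nonneg (mul_pos (hDpos j) ht0').le _)
              (Real.rpow_nonneg (mul_pos (hDpos j) ht0').le _))).symm
        _ = ENNReal.ofReal (M * ((2:ℝ) ^ (-σ)) ^ j) := by rw [hkey j]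
    have hcover : Ici t ∩ I ⊆ ⋃ j : ℕ, A j := by
      rintro s ⟨hts, hsI⟩
      have hts' : t ≤ s := hts
      have hs1 : (1 : ℝ) ≤ s / t := (one_le_div ht0').2 hts'
      have hst : (0 : ℝ) < s / t := lt_of_lt_of_le one_pos hs1
      set j := ⌊Real.logb 2 (s / t)⌋₊ with hjdef
      have hlb : (0 : ℝ) ≤ Real.logb 2 (s / t) := Real.logb_nonneg one_lt_two hs1
      have hup : s / t < 2 ^ (j + 1) := by
        have h1 : Real.logb 2 (s / t) < (j : ℝ) + 1 := Nat.lt_floor_add_one _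
        calc s / t = (2:ℝ) ^ Real.logb 2 (s / t) :=
              (Real.rpow_logb two_pos (by norm_num) hst).symm
          _ < (2:ℝ) ^ ((j : ℝ) + 1) := Real.rpow_lt_rpow_of_exponent_lt one_lt_two h1
          _ = 2 ^ (j + 1) := by
              rw [← Real.rpow_natCast (2:ℝ) (j + 1)]
              norm_num
      have hlo : (2:ℝ) ^ j ≤ s / t := by
        have h1 : (j : ℝ) ≤ Real.logb 2 (s / t) := Nat.floor_le hlb
        calc (2:ℝ) ^ j = (2:ℝ) ^ (j : ℝ) := (Real.rpow_natCast _ _).symm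
          _ ≤ (2:ℝ) ^ Real.logb 2 (s / t) := Real.rpow_le_rpow_of_exponent_le one_le_two h1
          _ = s / t := Real.rpow_logb two_pos (by norm_num) hst
      refine mem_iUnion.2 ⟨j, ⟨⟨?_, ?_⟩, hsI⟩⟩
      · exact (le_div_iff₀ ht0').1 hlo
      · calc s < 2 ^ (j + 1) * t := (div_lt_iff₀ ht0').1 hup
          _ = 2 * ((2:ℝ) ^ j * t) := by ring
    set a : ℝ := (2:ℝ) ^ (-(q.toReal * σ)) with hadef
    have ha0 : (0 : ℝ) < a := Real.rpow_pos_of_pos two_pos _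
    have ha1 : a < 1 := Real.rpow_lt_one_of_one_lt_of_neg one_lt_two
      (neg_lt_zero.2 (mul_pos hqt hσpos))
    have hexp : ∀ j : ℕ, (M * ((2:ℝ) ^ (-σ)) ^ j) ^ q.toReal = M ^ q.toReal * a ^ j := by
      intro j
      rw [Real.mul_rpow hM0.le (pow_nonneg (Real.rpow_nonneg (by norm_num) _) j)]
      congr 1
      rw [← Real.rpow_natCast ((2:ℝ) ^ (-σ)) j, ← Real.rpow_mul (by norm_num : (0:ℝ) ≤ 2),
        ← Real.rpow_mul (by norm_num : (0:ℝ) ≤ 2), hadef,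
        ← Real.rpow_natCast ((2:ℝ) ^ (-(q.toReal * σ))) j,
        ← Real.rpow_mul (by norm_num : (0:ℝ) ≤ 2)]
      ring_nf
    rw [eLpNorm_eq_lintegral_rpow_enorm_toReal hq0 hqtop]
    have hint : (∫⁻ s in Ici t ∩ I,
          (‖s ^ (-ρ) * ∏ k, f k s‖₊ : ℝ≥0∞) ^ q.toReal)
        ≤ ENNReal.ofReal (M ^ q.toReal) * (1 - ENNReal.ofReal a)⁻¹ := by
      calc (∫⁻ s in Ici t ∩ I, (‖s ^ (-ρ) * ∏ k, f k s‖₊ : ℝ≥0∞) ^ q.toReal)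
          ≤ ∫⁻ s in ⋃ j : ℕ, A j, (‖s ^ (-ρ) * ∏ k, f k s‖₊ : ℝ≥0∞) ^ q.toReal :=
            lintegral_mono_set hcover
        _ ≤ ∑' j : ℕ, ∫⁻ s in A j, (‖s ^ (-ρ) * ∏ k, f k s‖₊ : ℝ≥0∞) ^ q.toReal :=
            lintegral_iUnion_le _ _
        _ ≤ ∑' j : ℕ, ENNReal.ofReal (M ^ q.toReal) * (ENNReal.ofReal a) ^ j := by
            refine ENNReal.tsum_le_tsum fun j => ?_
            have hej : (∫⁻ s in A j, (‖s ^ (-ρ) * ∏ k, f k s‖₊ : ℝ≥0∞) ^ q.toReal)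
                = (eLpNorm (fun s : ℝ => s ^ (-ρ) * ∏ k, f k s) q
                    (volume.restrict (A j))) ^ q.toReal := by
              rw [eLpNorm_eq_lintegral_rpow_enorm_toReal hq0 hqtop, ← ENNReal.rpow_mul,
                one_div_mul_cancel hqt.ne', ENNReal.rpow_one]
              rfl
            rw [hej]
            calc (eLpNorm (fun s : ℝ => s ^ (-ρ) * ∏ k, f k s) q
                    (volume.restrict (A j))) ^ q.toReal
                ≤ (ENNReal.ofReal (M * ((2:ℝ) ^ (-σ)) ^ j)) ^ q.toReal :=
                  ENNReal.rpow_le_rpow (hblock j) hqt.le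
              _ = ENNReal.ofReal ((M * ((2:ℝ) ^ (-σ)) ^ j) ^ q.toReal) :=
                  ENNReal.ofReal_rpow_of_pos
                    (mul_pos hM0 (pow_pos (Real.rpow_pos_of_pos two_pos _) j))
              _ = ENNReal.ofReal (M ^ q.toReal * a ^ j) := by rw [hexp j]
              _ = ENNReal.ofReal (M ^ q.toReal) * (ENNReal.ofReal a) ^ j := by
                  rw [ENNReal.ofReal_mul (Real.rpow_nonneg hM0.le _),
                    ENNReal.ofReal_pow ha0.le]
        _ = ENNReal.ofReal (M ^ q.toReal) * (1 - ENNReal.ofReal a)⁻¹ := by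
            rw [ENNReal.tsum_mul_left, ENNReal.tsum_geometric]
    have ha1' : (0 : ℝ) < 1 - a := by linarith
    calc (∫⁻ s in Ici t ∩ I,
            (‖s ^ (-ρ) * ∏ k, f k s‖₊ : ℝ≥0∞) ^ q.toReal) ^ (1 / q.toReal)
        ≤ (ENNReal.ofReal (M ^ q.toReal) * (1 - ENNReal.ofReal a)⁻¹) ^ (1 / q.toReal) :=
          ENNReal.rpow_le_rpow hint (by positivity)
      _ = ENNReal.ofReal ((M ^ q.toReal * (1 - a)⁻¹) ^ (1 / q.toReal)) := by
          rw [show (1 : ℝ≥0∞) - ENNReal.ofReal a = ENNReal.ofReal (1 - a) by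
              rw [ENNReal.ofReal_sub _ ha0.le, ENNReal.ofReal_one],
            ← ENNReal.ofReal_inv_of_pos ha1',
            ← ENNReal.ofReal_mul (Real.rpow_nonneg hM0.le _),
            ENNReal.ofReal_rpow_of_pos
              (mul_pos (Real.rpow_pos_of_pos hM0 _) (inv_pos.2 ha1'))]
      _ = _ := by
          congr 1
          have e1 : (M ^ q.toReal) ^ (1 / q.toReal) = M := by
            rw [← Real.rpow_mul hM0.le, mul_one_div_cancel hqt.ne', Real.rpow_one]
          have e2 : ((1 - a)⁻¹) ^ (1 / q.toReal) = (1 - a) ^ (-(1 / q.toReal)) := by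
            rw [← Real.rpow_neg_one (1 - a), ← Real.rpow_mul ha1'.le, neg_one_mul]
          rw [Real.mul_rpow (Real.rpow_nonneg hM0.le _) (inv_nonneg.2 ha1'.le), e1, e2,
            hMdef]
          ring
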